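/- Let (M,ρ) be a finite pseudometric space, G a finite tree joining M in which every vertex of degree 1 belongs to M, and 𝒢 = (G,w) a generalized minimal parametric filling of type G. Let v be an interior vertex of G and S a set of m edges of G incident to v with m > deg(v)/2. Then there exist two distinct edges in S and an exact path of 𝒢 containing both of them. -/

import Mathlib

open scoped BigOperators

namespace MinFill

variable {V : Type*}

/-- The total weight of a (generalized) weighted graph: the sum of the weights
of its edges. -/
noncomputable def graphWeight (G : SimpleGraph V) (w : Sym2 V → ℝ) : ℝ :=
  ∑ᶠ e ∈ G.edgeSet, w e

/-- The weight of a walk: the sum of the weights of its edges. -/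
def walkWeight {G : SimpleGraph V} (w : Sym2 V → ℝ) {u v : V} (p : G.Walk u v) : ℝ :=
  (p.edges.map w).sum

/-- `dw G w u v` is the minimum over simple paths in `G` from `u` to `v` of the
sum of the weights of their edges. -/
noncomputable def dw (G : SimpleGraph V) (w : Sym2 V → ℝ) (u v : V) : ℝ :=
  sInf {r : ℝ | ∃ p : G.Walk u v, p.IsPath ∧ walkWeight w p = r}

/-- The degree of a vertex: the number of edges incident to it. -/
noncomputable def deg (G : SimpleGraph V) (v : V) : ℕ :=
  (G.neighborSet v).ncard

/-- `ρ` is a pseudometric on the subset `M`: symmetric, nonnegative, vanishing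
on the diagonal and satisfying the triangle inequality. -/
def IsPseudometricOn (M : Set V) (ρ : V → V → ℝ) : Prop :=
  (∀ p ∈ M, ∀ q ∈ M, ρ p q = ρ q p) ∧
  (∀ p ∈ M, ∀ q ∈ M, 0 ≤ ρ p q) ∧
  (∀ p ∈ M, ρ p p = 0) ∧
  (∀ p ∈ M, ∀ q ∈ M, ∀ r ∈ M, ρ p r ≤ ρ p q + ρ q r)

/-- `(G, w)` is a generalized filling of `(M, ρ)` (with `M ⊆ V`): `G` is
connected (and joins `M`), and for all boundary points `p, q ∈ M` every simple
path in `G` from `p` to `q` has weight at least `ρ p q` (equivalently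
`ρ p q ≤ d_w(p, q)`). -/
def IsGenFilling (G : SimpleGraph V) (w : Sym2 V → ℝ) (M : Set V) (ρ : V → V → ℝ) : Prop :=
  G.Connected ∧ ∀ p ∈ M, ∀ q ∈ M, ∀ γ : G.Walk p q, γ.IsPath → ρ p q ≤ walkWeight w γ

section Aux

open scoped Classical in
/-- Number of entries of a list of edges satisfying a predicate. -/
noncomputable def ecount (P : Sym2 V → Prop) (l : List (Sym2 V)) : ℕ :=
  (l.map fun e => if P e then 1 else 0).sum

@[simp] lemma ecount_nil (P : Sym2 V → Prop) : ecount P ([] : List (Sym2 V)) = 0 := rfl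

open scoped Classical in
lemma ecount_cons (P : Sym2 V → Prop) (e : Sym2 V) (l : List (Sym2 V)) :
    ecount P (e :: l) = (if P e then 1 else 0) + ecount P l := by
  simp [ecount]

lemma ecount_eq_zero {P : Sym2 V → Prop} {l : List (Sym2 V)} (h : ∀ e ∈ l, ¬ P e) :
    ecount P l = 0 := by
  induction l with
  | nil => rfl
  | cons e l ih =>
    rw [ecount_cons, if_neg (h e (List.mem_cons_self)),
      ih fun x hx => h x (List.mem_cons_of_mem _ hx)]

lemma ecount_mono {P Q : Sym2 V → Prop} {l : List (Sym2 V)} (h : ∀ e ∈ l, P e → Q e) :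
    ecount P l ≤ ecount Q l := by
  induction l with
  | nil => simp
  | cons e l ih =>
    rw [ecount_cons, ecount_cons]
    have h1 : ecount P l ≤ ecount Q l := ih fun x hx => h x (List.mem_cons_of_mem _ hx)
    by_cases hP : P e
    · rw [if_pos hP, if_pos (h e (List.mem_cons_self) hP)]; omega
    · rw [if_neg hP]; split <;> omega

lemma exists_of_one_le_ecount {P : Sym2 V → Prop} {l : List (Sym2 V)}
    (h : 1 ≤ ecount P l) : ∃ e ∈ l, P e := by
  by_contra hc
  push_neg at hc
  rw [ecount_eq_zero hc] at h
  omega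

lemma exists_two_of_ecount {P : Sym2 V → Prop} {l : List (Sym2 V)} (hl : l.Nodup)
    (h : 2 ≤ ecount P l) : ∃ a ∈ l, ∃ b ∈ l, a ≠ b ∧ P a ∧ P b := by
  induction l with
  | nil => simp [ecount] at h
  | cons e l ih =>
    rw [ecount_cons] at h
    by_cases hP : P e
    · rw [if_pos hP] at h
      obtain ⟨b, hb, hPb⟩ := exists_of_one_le_ecount (P := P) (l := l) (by omega)
      exact ⟨e, List.mem_cons_self, b, List.mem_cons_of_mem _ hb,
        fun hEq => (List.nodup_cons.mp hl).1 (hEq ▸ hb), hP, hPb⟩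
    · rw [if_neg hP] at h
      obtain ⟨a, ha, b, hb, hab, hPa, hPb⟩ := ih (List.nodup_cons.mp hl).2 (by omega)
      exact ⟨a, List.mem_cons_of_mem _ ha, b, List.mem_cons_of_mem _ hb, hab, hPa, hPb⟩

lemma mem_support_of_mem_edges' {G : SimpleGraph V} {p q x : V} (γ : G.Walk p q)
    {e : Sym2 V} (he : e ∈ γ.edges) (hx : x ∈ e) : x ∈ γ.support := by
  induction e with
  | _ a b =>
    rw [Sym2.mem_iff] at hx
    rcases hx with rfl | rfl
    · exact γ.fst_mem_support_of_mem_edges he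
    · exact γ.snd_mem_support_of_mem_edges he

lemma ecount_endpoint {G : SimpleGraph V} {a q : V} (γ : G.Walk a q) (hγ : γ.IsPath)
    (hne : a ≠ q) : ecount (fun e => a ∈ e) γ.edges = 1 := by
  induction γ with
  | nil => exact absurd rfl hne
  | @cons u b q hadj γ ih =>
    rw [SimpleGraph.Walk.edges_cons, ecount_cons, if_pos (Sym2.mem_mk_left u b)]
    have hns := ((SimpleGraph.Walk.cons_isPath_iff hadj γ).mp hγ).2
    rw [ecount_eq_zero fun e he hx => hns (mem_support_of_mem_edges' γ he hx)]

lemma ecount_internal {G : SimpleGraph V} {p q x : V} (γ : G.Walk p q) (hγ : γ.IsPath)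
    (hs : x ∈ γ.support) (hp : x ≠ p) (hq : x ≠ q) :
    ecount (fun e => x ∈ e) γ.edges = 2 := by
  induction γ with
  | nil => rw [SimpleGraph.Walk.support_nil, List.mem_singleton] at hs; exact absurd hs hp
  | @cons u b q hadj γ ih =>
    obtain ⟨hγ', hns⟩ := (SimpleGraph.Walk.cons_isPath_iff hadj γ).mp hγ
    have hs' : x ∈ γ.support := by
      rw [SimpleGraph.Walk.support_cons, List.mem_cons] at hs
      exact hs.resolve_left hp
    rw [SimpleGraph.Walk.edges_cons, ecount_cons]
    by_cases hxb : x = b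
    · subst hxb
      rw [if_pos (Sym2.mem_mk_right u x), ecount_endpoint γ hγ' hq]
    · rw [if_neg (by rw [Sym2.mem_iff]; push_neg; exact ⟨hp, hxb⟩), ih hγ' hs' hxb hq,
        zero_add]

lemma sum_map_pert {ε : ℝ} {v : V} {P : Sym2 V → Prop} (δ : Sym2 V → ℝ)
    (h1 : ∀ e, P e → δ e = -ε) (h2 : ∀ e, ¬ P e → v ∈ e → δ e = ε)
    (h3 : ∀ e, ¬ P e → ¬ v ∈ e → δ e = 0) (hPQ : ∀ e, P e → v ∈ e)
    (l : List (Sym2 V)) :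
    (l.map δ).sum = ε * ((ecount (fun e => v ∈ e) l : ℝ) - 2 * (ecount P l : ℝ)) := by
  induction l with
  | nil => simp
  | cons e l ih =>
    rw [List.map_cons, List.sum_cons, ih, ecount_cons, ecount_cons]
    by_cases hP : P e
    · rw [h1 e hP, if_pos hP, if_pos (hPQ e hP)]; push_cast; ring
    · by_cases hQ : v ∈ e
      · rw [h2 e hP hQ, if_pos hQ, if_neg hP]; push_cast; ring
      · rw [h3 e hP hQ, if_neg hQ, if_neg hP]; push_cast; ring

end Aux

/-- In a generalized minimal parametric filling, if `S` is a
set of `m > deg(v)/2` edges incident to an interior vertex `v`, then some two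
distinct edges of `S` are contained in a common exact path. -/
theorem many_edges_mem_exact_path {V : Type*} [Fintype V] (G : SimpleGraph V)
    (M : Set V) (ρ : V → V → ℝ) (hρ : IsPseudometricOn M ρ) (hG : G.IsTree)
    (hM : ∀ v : V, deg G v = 1 → v ∈ M) (w : Sym2 V → ℝ)
    (hfill : IsGenFilling G w M ρ)
    (hmin : ∀ w' : Sym2 V → ℝ, IsGenFilling G w' M ρ →
      graphWeight G w ≤ graphWeight G w')
    (v : V) (hv : v ∉ M) (S : Finset (Sym2 V))
    (hS : ∀ e ∈ S, e ∈ G.edgeSet ∧ v ∈ e) (hm : deg G v < 2 * S.card) :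
    ∃ e₁ ∈ S, ∃ e₂ ∈ S, e₁ ≠ e₂ ∧
      ∃ x ∈ M, ∃ y ∈ M, ∃ γ : G.Walk x y,
        γ.IsPath ∧ e₁ ∈ γ.edges ∧ e₂ ∈ γ.edges ∧ walkWeight w γ = ρ x y := by
  classical
  obtain ⟨hconn, hge⟩ := hfill
  by_contra hcon
  push_neg at hcon
  -- the unique path in the tree between two vertices
  have hEU : ∀ p q : V, ∃ γ : G.Walk p q, γ.IsPath ∧
      ∀ γ' : G.Walk p q, γ'.IsPath → γ' = γ := by
    intro p q
    obtain ⟨γ, h1, h2⟩ := hG.existsUnique_path p q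
    exact ⟨γ, h1, h2⟩
  choose P hP hPu using hEU
  -- the (finite) set of slacks of paths containing two edges of `S`
  set A : Set ℝ := {r | ∃ p q : V, p ∈ M ∧ q ∈ M ∧
      2 ≤ ecount (· ∈ S) (P p q).edges ∧ r = walkWeight w (P p q) - ρ p q} with hAdef
  have hAfin : A.Finite := by
    apply Set.Finite.subset ((Set.finite_univ (α := V × V)).image
      fun pq => walkWeight w (P pq.1 pq.2) - ρ pq.1 pq.2)
    rintro r ⟨p, q, -, -, -, rfl⟩
    exact ⟨(p, q), trivial, rfl⟩
  have hApos : ∀ r ∈ A, 0 < r := by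
    rintro r ⟨p, q, hpM, hqM, h2, rfl⟩
    have hle : ρ p q ≤ walkWeight w (P p q) := hge p hpM q hqM _ (hP p q)
    rcases lt_or_eq_of_le hle with h | h
    · linarith
    · obtain ⟨e₁, he₁, e₂, he₂, hne, hs1, hs2⟩ :=
        exists_two_of_ecount (hP p q).edges_nodup h2
      exact absurd h.symm
        (hcon e₁ hs1 e₂ hs2 hne p hpM q hqM (P p q) (hP p q) he₁ he₂)
  set ε : ℝ := if hA : A.Nonempty then sInf A / 2 else 1 with hεdef
  have hε : 0 < ε := by
    rw [hεdef]
    split_ifs with hA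
    · have := hApos _ (hA.csInf_mem hAfin)
      linarith
    · norm_num
  have hεle : ∀ r ∈ A, 2 * ε ≤ r := by
    intro r hr
    rw [hεdef, dif_pos ⟨r, hr⟩]
    have := csInf_le hAfin.bddBelow hr
    linarith
  -- the perturbation
  set δ : Sym2 V → ℝ := fun e => if e ∈ S then -ε else if v ∈ e then ε else 0 with hδdef
  set w' : Sym2 V → ℝ := fun e => w e + δ e with hw'def
  have hδ1 : ∀ e, e ∈ S → δ e = -ε := fun e he => by rw [hδdef]; simp [he]
  have hδ2 : ∀ e, e ∉ S → v ∈ e → δ e = ε := fun e he hv' => by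
    rw [hδdef]; simp [he, hv']
  have hδ3 : ∀ e, e ∉ S → ¬ v ∈ e → δ e = 0 := fun e he hv' => by
    rw [hδdef]; simp [he, hv']
  have hSv : ∀ e, e ∈ S → v ∈ e := fun e he => (hS e he).2
  have hsum : ∀ {p q : V} (γ : G.Walk p q), walkWeight w' γ = walkWeight w γ +
      ε * ((ecount (fun e => v ∈ e) γ.edges : ℝ) - 2 * (ecount (· ∈ S) γ.edges : ℝ)) := by
    intro p q γ
    rw [← sum_map_pert δ hδ1 hδ2 hδ3 hSv γ.edges]
    simp only [walkWeight, hw'def, ← List.sum_map_add]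
  -- `w'` is still a filling
  have hfill' : IsGenFilling G w' M ρ := by
    refine ⟨hconn, ?_⟩
    intro p hpM q hqM γ hγ
    have hbase := hge p hpM q hqM γ hγ
    rw [hsum γ]
    set k := ecount (· ∈ S) γ.edges with hk
    set i := ecount (fun e => v ∈ e) γ.edges with hi
    rcases Nat.eq_zero_or_pos k with hk0 | hkpos
    · have h0 : (0 : ℝ) ≤ (i : ℝ) := Nat.cast_nonneg _
      rw [hk0]
      push_cast
      nlinarith
    · obtain ⟨e, heγ, heS⟩ := exists_of_one_le_ecount (P := (· ∈ S)) hkpos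
      have hvsup : v ∈ γ.support := mem_support_of_mem_edges' γ heγ (hSv e heS)
      have hvp : v ≠ p := fun h => hv (h ▸ hpM)
      have hvq : v ≠ q := fun h => hv (h ▸ hqM)
      have hi2 : i = 2 := ecount_internal γ hγ hvsup hvp hvq
      have hki : k ≤ i := ecount_mono fun e _ he => hSv e he
      rcases Nat.lt_or_ge k 2 with h1 | h2
      · have hk1 : k = 1 := by omega
        rw [hi2, hk1]
        push_cast
        linarith
      · have hk2 : k = 2 := by omega
        have hγP : γ = P p q := hPu p q γ hγ
        have hrA : walkWeight w γ - ρ p q ∈ A := by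
          refine ⟨p, q, hpM, hqM, ?_, by rw [hγP]⟩
          rw [← hγP, ← hk, hk2]
        have := hεle _ hrA
        rw [hi2, hk2]
        push_cast
        linarith
  -- but `w'` has strictly smaller total weight
  have hEfin : Fintype G.edgeSet := Set.Finite.fintype (Set.toFinite _)
  have hgw : ∀ u : Sym2 V → ℝ, graphWeight G u = ∑ e ∈ G.edgeFinset, u e := by
    intro u
    rw [graphWeight, ← SimpleGraph.coe_edgeFinset, finsum_mem_coe_finset]
  have hlt : graphWeight G w' < graphWeight G w := by
    rw [hgw w, hgw w']
    have hsplit : ∑ e ∈ G.edgeFinset, w' e =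
        ∑ e ∈ G.edgeFinset, w e + ∑ e ∈ G.edgeFinset, δ e := by
      rw [hw'def, Finset.sum_add_distrib]
    rw [hsplit]
    have hIeq : G.incidenceFinset v = {e ∈ G.edgeFinset | v ∈ e} :=
      SimpleGraph.incidenceFinset_eq_filter G v
    set I : Finset (Sym2 V) := G.edgeFinset.filter (fun e => v ∈ e) with hIdef
    have hSI : S ⊆ I := by
      intro e he
      rw [hIdef, Finset.mem_filter]
      exact ⟨SimpleGraph.mem_edgeFinset.mpr (hS e he).1, (hS e he).2⟩
    have hδsplit : ∑ e ∈ G.edgeFinset, δ e =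
        ∑ e ∈ I, δ e + ∑ e ∈ G.edgeFinset.filter (fun e => ¬ v ∈ e), δ e :=
      (Finset.sum_filter_add_sum_filter_not G.edgeFinset (fun e => v ∈ e) δ).symm
    have hzero : ∑ e ∈ G.edgeFinset.filter (fun e => ¬ v ∈ e), δ e = 0 := by
      refine Finset.sum_eq_zero fun e he => ?_
      have hnv : ¬ v ∈ e := (Finset.mem_filter.mp he).2
      exact hδ3 e (fun heS => hnv (hSv e heS)) hnv
    have hIsum : ∑ e ∈ I, δ e = ∑ e ∈ I \ S, δ e + ∑ e ∈ S, δ e :=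
      (Finset.sum_sdiff hSI).symm
    have hSsum : ∑ e ∈ S, δ e = S.card * (-ε) := by
      rw [Finset.sum_congr rfl fun e he => hδ1 e he, Finset.sum_const, nsmul_eq_mul]
    have hISsum : ∑ e ∈ I \ S, δ e = (I.card - S.card : ℕ) * ε := by
      rw [Finset.sum_congr rfl fun e he => by
        obtain ⟨heI, heS⟩ := Finset.mem_sdiff.mp he
        exact hδ2 e heS (Finset.mem_filter.mp heI).2]
      rw [Finset.sum_const, nsmul_eq_mul, Finset.card_sdiff_of_subset hSI]
    have hIcard : I.card = deg G v := by
      rw [← hIeq, SimpleGraph.card_incidenceFinset_eq_degree, deg,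
        Set.ncard_eq_toFinset_card', ← SimpleGraph.neighborFinset_def,
        SimpleGraph.degree]
    have hcard : S.card ≤ I.card := Finset.card_le_card hSI
    have hdegR : (deg G v : ℝ) < 2 * S.card := by exact_mod_cast hm
    have hneg : ∑ e ∈ G.edgeFinset, δ e < 0 := by
      rw [hδsplit, hzero, hIsum, hSsum, hISsum, hIcard]
      rw [Nat.cast_sub (hIcard ▸ hcard)]
      rw [hIcard] at hcard
      nlinarith
    linarith
  exact absurd (hmin w' hfill') (not_le.mpr hlt)

end MinFill
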